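/- For odd positive integers w₁, w₂ and all n ≥ 0: w₁^n Σ_{i=0}^{w₁-1} (-1)^i 𝓔_n(w₂ x + (w₂/w₁)i | λ/w₁) = w₂^n Σ_{i=0}^{w₂-1} (-1)^i 𝓔_n(w₁ x + (w₁/w₂)i | λ/w₂). -/
import Mathlib


open Polynomial Finset

noncomputable def dff {R : Type*} [CommRing R] (μ : R) (n : ℕ) : Polynomial R :=
  ∏ i ∈ Finset.range n, (Polynomial.X - Polynomial.C ((i : R) * μ))

section helpers

variable {K : Type*} [Field K] [CharZero K]

lemma comp_X_add_one_inj {P Q : K[X]}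
    (h : P.comp (X + 1) + P = Q.comp (X + 1) + Q) : P = Q := by
  by_contra hne
  have hR : P - Q ≠ 0 := sub_ne_zero.mpr hne
  have h0 : (P - Q).comp (X + 1) + (P - Q) = 0 := by
    rw [sub_comp]; linear_combination h
  set R := P - Q with hRdef
  have hq1 : natDegree ((X : K[X]) + 1) = 1 := by
    simpa using natDegree_X_add_C (1 : K)
  have hlc : (R.comp (X + 1)).leadingCoeff = R.leadingCoeff := by
    rw [leadingCoeff_comp (by rw [hq1]; exact one_ne_zero)]
    have : ((X : K[X]) + 1).leadingCoeff = 1 := by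
      simpa using leadingCoeff_X_add_C (1 : K)
    rw [this, one_pow, mul_one]
  have hnd : (R.comp (X + 1)).natDegree = R.natDegree := by
    rw [natDegree_comp, hq1, mul_one]
  have hc := congrArg (fun p => Polynomial.coeff p R.natDegree) h0
  simp only [coeff_add, coeff_zero] at hc
  rw [show (R.comp (X+1)).coeff R.natDegree = (R.comp (X+1)).leadingCoeff by
    rw [Polynomial.leadingCoeff, hnd], hlc] at hc
  have h2 : (2 : K) * R.leadingCoeff = 0 := by
    rw [Polynomial.leadingCoeff] at hc ⊢; linear_combination hc
  rcases mul_eq_zero.mp h2 with h2 | h2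
  · exact two_ne_zero h2
  · exact hR (leadingCoeff_eq_zero.mp h2)

lemma telescope (E : K → ℕ → K[X])
    (hE : ∀ μ m, (E μ m).comp (X + 1) + E μ m = 2 * dff μ m)
    (μ : K) (n : ℕ) : ∀ m : ℕ,
    2 * ∑ k ∈ range m, C ((-1:K)^k) * (dff μ n).comp (X + C (k:K))
      = E μ n + C ((-1:K)^(m+1)) * (E μ n).comp (X + C (m:K)) := by
  intro m
  induction m with
  | zero => simp
  | succ m ih =>
    have h2 : ((E μ n).comp (X+1)).comp (X + C (m:K))
        = (E μ n).comp (X + C ((m+1:ℕ):K)) := by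
      rw [comp_assoc]; congr 1
      push_cast
      simp [add_comp, C_add]
      ring
    have h1 : (E μ n).comp (X + C ((m+1:ℕ):K)) + (E μ n).comp (X + C (m:K))
        = 2 * (dff μ n).comp (X + C (m:K)) := by
      rw [← h2, ← add_comp, hE, mul_comp]
      norm_num
    rw [sum_range_succ, mul_add, ih]
    have e1 : C ((-1:K)^(m+1)) = -C ((-1:K)^m) := by
      rw [pow_succ]; simp
    have e2 : C ((-1:K)^(m+1+1)) = C ((-1:K)^m) := by
      congr 1; rw [pow_succ, pow_succ]; ring
    rw [e1, e2]
    push_cast at h1 ⊢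
    linear_combination -(C ((-1:K)^m)) * h1

lemma dff_scale (μ a : K) (ha : a ≠ 0) (n : ℕ) :
    (dff μ n).comp (C a * X) = C (a^n) * dff (μ/a) n := by
  unfold dff
  rw [Polynomial.prod_comp]
  have h : ∀ i ∈ range n,
      ((X : K[X]) - C ((i:K)*μ)).comp (C a * X) = C a * (X - C ((i:K)*(μ/a))) := by
    intro i _
    rw [sub_comp, X_comp, C_comp, mul_sub]
    congr 1
    rw [← C_mul]
    congr 1
    field_simp
  rw [prod_congr rfl h, prod_mul_distrib, prod_const, card_range, ← C_pow]

lemma multThm (E : K → ℕ → K[X])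
    (hE : ∀ μ m, (E μ m).comp (X + 1) + E μ m = 2 * dff μ m)
    (ν : K) (m : ℕ) (hm : Odd m) (hm' : 0 < m) (n : ℕ) :
    (E ν n).comp (C (m:K) * X)
      = C ((m:K)^n) * ∑ j ∈ range m,
          C ((-1:K)^j) * (E (ν/(m:K)) n).comp (X + C ((j:K)/(m:K))) := by
  have hm0 : (m:K) ≠ 0 := Nat.cast_ne_zero.mpr hm'.ne'
  apply comp_X_add_one_inj (K := K)
  have ht := telescope E hE ν n m
  rw [show ((-1:K)^(m+1)) = 1 by
    rw [pow_succ, hm.neg_one_pow]; ring, map_one, one_mul] at ht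
  have hL : ((E ν n).comp (C (m:K) * X)).comp (X + 1) + (E ν n).comp (C (m:K) * X)
      = 2 * ∑ k ∈ range m, C ((-1:K)^k) * (dff ν n).comp (C (m:K) * X + C (k:K)) := by
    have hc := congrArg (fun p => p.comp (C (m:K) * X)) ht
    simp only [mul_comp, add_comp, Polynomial.sum_comp, C_comp, X_comp,
      comp_assoc, ofNat_comp] at hc ⊢
    push_cast at hc ⊢
    rw [show (C ((m:K)) * (X + 1) : K[X]) = C ((m:K)) * X + C ((m:K)) by rw [mul_add, mul_one]]
    linear_combination -hc
  have hR : (C ((m:K)^n) * ∑ j ∈ range m,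
        C ((-1:K)^j) * (E (ν/(m:K)) n).comp (X + C ((j:K)/(m:K)))).comp (X + 1)
      + C ((m:K)^n) * ∑ j ∈ range m,
        C ((-1:K)^j) * (E (ν/(m:K)) n).comp (X + C ((j:K)/(m:K)))
      = 2 * ∑ k ∈ range m, C ((-1:K)^k) * (dff ν n).comp (C (m:K) * X + C (k:K)) := by
    have key : ∀ j : ℕ, (dff ν n).comp (C (m:K) * X + C (j:K))
        = C ((m:K)^n) * (dff (ν/(m:K)) n).comp (X + C ((j:K)/(m:K))) := by
      intro j
      have hmj : (m:K) * ((j:K)/(m:K)) = (j:K) := by field_simp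
      have harg : (C (m:K) * X + C (j:K) : K[X])
          = (C (m:K) * X).comp (X + C ((j:K)/(m:K))) := by
        rw [mul_comp, C_comp, X_comp, mul_add, ← C_mul, hmj]
      rw [harg, ← comp_assoc, dff_scale ν (m:K) hm0 n, mul_comp, C_comp]
    have keyE : ∀ j : ℕ, ((E (ν/(m:K)) n).comp (X + C ((j:K)/(m:K)))).comp (X + 1)
        + (E (ν/(m:K)) n).comp (X + C ((j:K)/(m:K)))
        = 2 * (dff (ν/(m:K)) n).comp (X + C ((j:K)/(m:K))) := by
      intro j
      rw [comp_assoc, show ((X : K[X]) + C ((j:K)/(m:K))).comp (X + 1)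
          = ((X : K[X]) + 1).comp (X + C ((j:K)/(m:K))) by
        simp only [add_comp, X_comp, one_comp, C_comp]; ring]
      rw [← comp_assoc, ← add_comp, hE, mul_comp]
      norm_num
    calc
      _ = C ((m:K)^n) * ∑ j ∈ range m, C ((-1:K)^j) *
            (((E (ν/(m:K)) n).comp (X + C ((j:K)/(m:K)))).comp (X + 1)
             + (E (ν/(m:K)) n).comp (X + C ((j:K)/(m:K)))) := by
        simp only [mul_comp, Polynomial.sum_comp, C_comp]
        rw [← mul_add, ← sum_add_distrib]
        congr 1
        exact sum_congr rfl fun j _ => by ring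
      _ = C ((m:K)^n) * ∑ j ∈ range m, C ((-1:K)^j) *
            (2 * (dff (ν/(m:K)) n).comp (X + C ((j:K)/(m:K)))) := by
        congr 1
        exact sum_congr rfl fun j _ => by rw [keyE j]
      _ = 2 * ∑ k ∈ range m, C ((-1:K)^k) * (dff ν n).comp (C (m:K) * X + C (k:K)) := by
        rw [mul_sum, mul_sum]
        exact sum_congr rfl fun k _ => by rw [key k]; ring
  rw [hL, hR]

lemma halfThm (E : K → ℕ → K[X])
    (hE : ∀ μ m, (E μ m).comp (X + 1) + E μ m = 2 * dff μ m)
    (lam : K) (a b : ℕ) (hb : Odd b) (hb' : 0 < b) (ha0 : (a:K) ≠ 0) (n : ℕ) :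
    C ((a:K)^n) * ∑ i ∈ range a, C ((-1:K)^i) *
        (E (lam/(a:K)) n).comp (C (b:K) * X + C ((b:K)/(a:K) * (i:K)))
    = ∑ i ∈ range a, ∑ j ∈ range b,
        C (((a:K)^n * (b:K)^n) * ((-1:K)^i * (-1:K)^j)) *
          (E (lam/(a:K)/(b:K)) n).comp (X + (C ((i:K)/(a:K)) + C ((j:K)/(b:K)))) := by
  rw [mul_sum]
  apply sum_congr rfl
  intro i _
  have hba : (b:K)/(a:K) * (i:K) = (b:K) * ((i:K)/(a:K)) := by ring
  have harg : (C (b:K) * X + C ((b:K)/(a:K) * (i:K)) : K[X])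
      = (C (b:K) * X).comp (X + C ((i:K)/(a:K))) := by
    rw [mul_comp, C_comp, X_comp, mul_add, ← C_mul, hba]
  rw [harg, ← comp_assoc, multThm E hE (lam/(a:K)) b hb hb' n]
  rw [mul_comp, C_comp, Polynomial.sum_comp, mul_sum, mul_sum, mul_sum]
  apply sum_congr rfl
  intro j _
  simp only [mul_comp, C_comp, comp_assoc, add_comp, X_comp]
  rw [show ((X : K[X]) + C ((i:K)/(a:K)) + C ((j:K)/(b:K)))
      = X + (C ((i:K)/(a:K)) + C ((j:K)/(b:K))) by ring]
  simp only [map_mul]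
  ring

end helpers

instance : CharZero (RatFunc ℚ) :=
  charZero_of_injective_algebraMap (algebraMap ℚ (RatFunc ℚ)).injective

/-- Corollary 5: for odd `w₁ w₂`,
`w₁^n ∑_{i<w₁} (-1)^i 𝓔_n(w₂x + (w₂/w₁)i | λ/w₁)
 = w₂^n ∑_{i<w₂} (-1)^i 𝓔_n(w₁x + (w₁/w₂)i | λ/w₂)` in `ℚ(λ)[x]`. -/
theorem stmt9 (E : RatFunc ℚ → ℕ → Polynomial (RatFunc ℚ))
    (hE : ∀ μ m, (E μ m).comp (Polynomial.X + 1) + E μ m = 2 * dff μ m)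
    (w₁ w₂ : ℕ) (hw₁ : Odd w₁) (hw₂ : Odd w₂) (hw₁' : 0 < w₁) (hw₂' : 0 < w₂)
    (n : ℕ) :
    Polynomial.C ((w₁ : RatFunc ℚ) ^ n) *
        ∑ i ∈ Finset.range w₁, Polynomial.C ((-1 : RatFunc ℚ) ^ i) *
          (E (RatFunc.X / (w₁ : RatFunc ℚ)) n).comp
            (Polynomial.C (w₂ : RatFunc ℚ) * Polynomial.X +
              Polynomial.C ((w₂ : RatFunc ℚ) / (w₁ : RatFunc ℚ) * (i : RatFunc ℚ))) =
      Polynomial.C ((w₂ : RatFunc ℚ) ^ n) *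
        ∑ i ∈ Finset.range w₂, Polynomial.C ((-1 : RatFunc ℚ) ^ i) *
          (E (RatFunc.X / (w₂ : RatFunc ℚ)) n).comp
            (Polynomial.C (w₁ : RatFunc ℚ) * Polynomial.X +
              Polynomial.C ((w₁ : RatFunc ℚ) / (w₂ : RatFunc ℚ) * (i : RatFunc ℚ))) := by
  have h10 : ((w₁ : ℕ) : RatFunc ℚ) ≠ 0 := Nat.cast_ne_zero.mpr hw₁'.ne'
  have h20 : ((w₂ : ℕ) : RatFunc ℚ) ≠ 0 := Nat.cast_ne_zero.mpr hw₂'.ne'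
  rw [halfThm E hE RatFunc.X w₁ w₂ hw₂ hw₂' h10 n,
      halfThm E hE RatFunc.X w₂ w₁ hw₁ hw₁' h20 n, Finset.sum_comm]
  apply sum_congr rfl
  intro i _
  apply sum_congr rfl
  intro j _
  rw [show RatFunc.X / (w₂ : RatFunc ℚ) / (w₁ : RatFunc ℚ)
      = RatFunc.X / (w₁ : RatFunc ℚ) / (w₂ : RatFunc ℚ) by
    rw [div_div, div_div, mul_comm]]
  congr 1
  · congr 1; ring
  · congr 1; ring
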